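/- Given the shift data and operational data of a fully polarized LG-algebra, each of the induced operations on P ⊕ N is compatible with the relation ≤π: ⊗' and ⊕' are monotone in both coordinates; \' and ⦸' are antitone in the first coordinate and monotone in the second; /' and ⊘' are monotone in the first coordinate and antitone in the second (monotone meaning A ≤π A' implies F(A, B) ≤π F(A', B), antitone meaning A ≤π A' implies F(A', B) ≤π F(A, B), and similarly in the second coordinate). -/
import Mathlib


/-- A weakening relation from an ordered set `(α, leA)` to an ordered set `(β, leB)`. -/
def IsWeakeningBetween {α β : Type*} (leA : α → α → Prop) (leB : β → β → Prop)
    (R : α → β → Prop) : Prop :=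
  ∀ ⦃a' a b b'⦄, leA a' a → R a b → leB b b' → R a' b'

/-- The shift data of a fully polarized LG-algebra: four posets `P`, `Ṗ` (`Pd`),
`N`, `Ṅ` (`Nd`), adjoint pairs of monotone shift maps `↑ ⊣ ⫞` and `↿ ⊣ ↓`, and
three weakening relations `⪌ʳ` (`gtr : P → Ṗ`), `⪯` (`prec : P → N`) and
`⪅ᵇ` (`lesb : Ṅ → N`) with `↑p ⪅ᵇ n ↔ p ⪯ n ↔ p ⪌ʳ ↓n`. -/
structure ShiftData (P Pd N Nd : Type*) [PartialOrder P] [PartialOrder Pd]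
    [PartialOrder N] [PartialOrder Nd] where
  /-- `↑ : P → Ṅ` -/
  up : P → Nd
  /-- `⫞ : Ṅ → P` -/
  corner : Nd → P
  /-- `↿ : Ṗ → N` -/
  upl : Pd → N
  /-- `↓ : N → Ṗ` -/
  down : N → Pd
  up_mono : Monotone up
  corner_mono : Monotone corner
  upl_mono : Monotone upl
  down_mono : Monotone down
  /-- the adjunction `↑ ⊣ ⫞` -/
  up_adj : ∀ (p : P) (nd : Nd), up p ≤ nd ↔ p ≤ corner nd
  /-- the adjunction `↿ ⊣ ↓` -/
  upl_adj : ∀ (pd : Pd) (n : N), upl pd ≤ n ↔ pd ≤ down n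
  /-- `⪌ʳ : P → Ṗ` -/
  gtr : P → Pd → Prop
  /-- `⪯ : P → N` -/
  prec : P → N → Prop
  /-- `⪅ᵇ : Ṅ → N` -/
  lesb : Nd → N → Prop
  gtr_wk : IsWeakeningBetween (· ≤ ·) (· ≤ ·) gtr
  prec_wk : IsWeakeningBetween (· ≤ ·) (· ≤ ·) prec
  lesb_wk : IsWeakeningBetween (· ≤ ·) (· ≤ ·) lesb
  /-- `↑p ⪅ᵇ n ↔ p ⪯ n` -/
  lesb_up_iff_prec : ∀ (p : P) (n : N), lesb (up p) n ↔ prec p n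
  /-- `p ⪯ n ↔ p ⪌ʳ ↓n` -/
  prec_iff_gtr_down : ∀ (p : P) (n : N), prec p n ↔ gtr p (down n)

variable {P Pd N Nd : Type*} [PartialOrder P] [PartialOrder Pd]
  [PartialOrder N] [PartialOrder Nd]

/-- The represented relation `⪌ : P → Ṅ`, `p ⪌ ṅ ↔ ↑p ⩿_Ṅ ṅ`. -/
def ShiftData.gles (S : ShiftData P Pd N Nd) (p : P) (nd : Nd) : Prop := S.up p ≤ nd

/-- The represented relation `⪷ : Ṗ → N`, `ṗ ⪷ n ↔ ṗ ⩿_Ṗ ↓n`. -/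
def ShiftData.pres (S : ShiftData P Pd N Nd) (pd : Pd) (n : N) : Prop := pd ≤ S.down n

/-- The relation `⸧ : P̊ → N̊` with `P̊ = P ⊕ Ṗ` and `N̊ = N ⊕ Ṅ`, defined by cases
from `⪯`, `⪌` and `⪷` (and never holding between two shifted elements). -/
def ShiftData.tack (S : ShiftData P Pd N Nd) : P ⊕ Pd → N ⊕ Nd → Prop
  | Sum.inl p, Sum.inl n => S.prec p n
  | Sum.inl p, Sum.inr nd => S.gles p nd
  | Sum.inr pd, Sum.inl n => S.pres pd n
  | Sum.inr _, Sum.inr _ => False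

/-- The relation `≤π` on `P ⊕ N`: `p ≤π q ↔ p ⪌ ↑q`, `p ≤π n ↔ p ⪯ n`,
`m ≤π n ↔ ↓m ⪷ n`, and no element of `N` is below an element of `P`. -/
def ShiftData.lepi (S : ShiftData P Pd N Nd) : P ⊕ N → P ⊕ N → Prop
  | Sum.inl p, Sum.inl q => S.gles p (S.up q)
  | Sum.inl p, Sum.inr n => S.prec p n
  | Sum.inr m, Sum.inr n => S.pres (S.down m) n
  | Sum.inr _, Sum.inl _ => False

/-- A fully polarized LG-algebra: shift data together with the six heterogeneous
operations `⊗, \, /, ⊕, ⊘, ⦸` satisfying the residuation laws w.r.t. `⸧`. -/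
structure FPLG (P Pd N Nd : Type*) [PartialOrder P] [PartialOrder Pd]
    [PartialOrder N] [PartialOrder Nd] extends ShiftData P Pd N Nd where
  /-- `⊗ : P̊ × P̊ → P` -/
  tens : P ⊕ Pd → P ⊕ Pd → P
  /-- `\ : P̊ × N̊ → N` -/
  lres : P ⊕ Pd → N ⊕ Nd → N
  /-- `/ : N̊ × P̊ → N` -/
  rres : N ⊕ Nd → P ⊕ Pd → N
  /-- `⊕ : N̊ × N̊ → N` -/
  coten : N ⊕ Nd → N ⊕ Nd → N
  /-- `⊘ : P̊ × N̊ → P` -/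
  lsub : P ⊕ Pd → N ⊕ Nd → P
  /-- `⦸ : N̊ × P̊ → P` -/
  rsub : N ⊕ Nd → P ⊕ Pd → P
  /-- `y ⸧ x \ z ↔ x ⊗ y ⸧ z` -/
  resid_left : ∀ (x y : P ⊕ Pd) (z : N ⊕ Nd),
    toShiftData.tack y (Sum.inl (lres x z)) ↔ toShiftData.tack (Sum.inl (tens x y)) z
  /-- `x ⊗ y ⸧ z ↔ x ⸧ z / y` -/
  resid_right : ∀ (x y : P ⊕ Pd) (z : N ⊕ Nd),
    toShiftData.tack (Sum.inl (tens x y)) z ↔ toShiftData.tack x (Sum.inl (rres z y))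
  /-- `x ⊘ w ⸧ z ↔ x ⸧ z ⊕ w` -/
  coresid_left : ∀ (x : P ⊕ Pd) (z w : N ⊕ Nd),
    toShiftData.tack (Sum.inl (lsub x w)) z ↔ toShiftData.tack x (Sum.inl (coten z w))
  /-- `x ⸧ z ⊕ w ↔ z ⦸ x ⸧ w` -/
  coresid_right : ∀ (x : P ⊕ Pd) (z w : N ⊕ Nd),
    toShiftData.tack x (Sum.inl (coten z w)) ↔ toShiftData.tack (Sum.inl (rsub z x)) w

/-- `A⁺ ∈ P̊`: the positive representative of `A ∈ P ⊕ N`. -/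
def FPLG.pos (F : FPLG P Pd N Nd) : P ⊕ N → P ⊕ Pd
  | Sum.inl p => Sum.inl p
  | Sum.inr n => Sum.inr (F.down n)

/-- `A⁻ ∈ N̊`: the negative representative of `A ∈ P ⊕ N`. -/
def FPLG.neg (F : FPLG P Pd N Nd) : P ⊕ N → N ⊕ Nd
  | Sum.inl p => Sum.inr (F.up p)
  | Sum.inr n => Sum.inl n

/-- The induced operation `A ⊗' B = A⁺ ⊗ B⁺` on `P ⊕ N`. -/
def FPLG.tens' (F : FPLG P Pd N Nd) (A B : P ⊕ N) : P ⊕ N :=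
  Sum.inl (F.tens (F.pos A) (F.pos B))

/-- The induced operation `A \' B = A⁺ \ B⁻` on `P ⊕ N`. -/
def FPLG.lres' (F : FPLG P Pd N Nd) (A B : P ⊕ N) : P ⊕ N :=
  Sum.inr (F.lres (F.pos A) (F.neg B))

/-- The induced operation `A /' B = A⁻ / B⁺` on `P ⊕ N`. -/
def FPLG.rres' (F : FPLG P Pd N Nd) (A B : P ⊕ N) : P ⊕ N :=
  Sum.inr (F.rres (F.neg A) (F.pos B))

/-- The induced operation `A ⊕' B = A⁻ ⊕ B⁻` on `P ⊕ N`. -/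
def FPLG.coten' (F : FPLG P Pd N Nd) (A B : P ⊕ N) : P ⊕ N :=
  Sum.inr (F.coten (F.neg A) (F.neg B))

/-- The induced operation `A ⊘' B = A⁺ ⊘ B⁻` on `P ⊕ N`. -/
def FPLG.lsub' (F : FPLG P Pd N Nd) (A B : P ⊕ N) : P ⊕ N :=
  Sum.inl (F.lsub (F.pos A) (F.neg B))

/-- The induced operation `A ⦸' B = A⁻ ⦸ B⁺` on `P ⊕ N`. -/
def FPLG.rsub' (F : FPLG P Pd N Nd) (A B : P ⊕ N) : P ⊕ N :=
  Sum.inl (F.rsub (F.neg A) (F.pos B))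

section Aux

variable {S : ShiftData P Pd N Nd}

/-- Auxiliary order-like relation on `P̊`. -/
def ShiftData.Rrel (S : ShiftData P Pd N Nd) : P ⊕ Pd → P ⊕ Pd → Prop
  | Sum.inl p, Sum.inl q => S.up p ≤ S.up q
  | Sum.inl p, Sum.inr pd => S.gtr p pd
  | Sum.inr pd, Sum.inr pd' => pd ≤ pd'
  | Sum.inr _, Sum.inl _ => False

/-- Auxiliary order-like relation on `N̊`. -/
def ShiftData.Srel (S : ShiftData P Pd N Nd) : N ⊕ Nd → N ⊕ Nd → Prop
  | Sum.inl m, Sum.inl n => S.down m ≤ S.down n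
  | Sum.inr nd, Sum.inl n => S.lesb nd n
  | Sum.inr nd, Sum.inr nd' => nd ≤ nd'
  | Sum.inl _, Sum.inr _ => False

lemma tack_anti {x x' : P ⊕ Pd} {z : N ⊕ Nd} (h : S.Rrel x x') (h2 : S.tack x' z) :
    S.tack x z := by
  cases x with
  | inl p =>
    cases x' with
    | inl q =>
      cases z with
      | inl n =>
        exact (S.lesb_up_iff_prec p n).1
          (S.lesb_wk h ((S.lesb_up_iff_prec q n).2 h2) le_rfl)
      | inr nd => exact le_trans h h2
    | inr pd =>
      cases z with
      | inl n => exact (S.prec_iff_gtr_down p n).2 (S.gtr_wk le_rfl h h2)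
      | inr nd => exact h2.elim
  | inr pd =>
    cases x' with
    | inl q => exact h.elim
    | inr pd' =>
      cases z with
      | inl n => exact le_trans h h2
      | inr nd => exact h2.elim

lemma tack_mono {x : P ⊕ Pd} {z z' : N ⊕ Nd} (h2 : S.tack x z) (h : S.Srel z z') :
    S.tack x z' := by
  cases z with
  | inl m =>
    cases z' with
    | inl n =>
      cases x with
      | inl p =>
        exact (S.prec_iff_gtr_down p n).2
          (S.gtr_wk le_rfl ((S.prec_iff_gtr_down p m).1 h2) h)
      | inr pd => exact le_trans h2 h
    | inr nd => exact h.elim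
  | inr nd =>
    cases z' with
    | inl n =>
      cases x with
      | inl p => exact (S.lesb_up_iff_prec p n).1 (S.lesb_wk h2 h le_rfl)
      | inr pd => exact h2.elim
    | inr nd' =>
      cases x with
      | inl p => exact le_trans h2 h
      | inr pd => exact h2.elim

end Aux

section FAux

variable {F : FPLG P Pd N Nd}

lemma lepi_Rrel {A A' : P ⊕ N} (h : F.toShiftData.lepi A A') :
    F.toShiftData.Rrel (F.pos A) (F.pos A') := by
  cases A with
  | inl p =>
    cases A' with
    | inl q => exact h
    | inr n => exact (F.toShiftData.prec_iff_gtr_down p n).1 h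
  | inr m =>
    cases A' with
    | inl q => exact h.elim
    | inr n => exact h

lemma lepi_Srel {A A' : P ⊕ N} (h : F.toShiftData.lepi A A') :
    F.toShiftData.Srel (F.neg A) (F.neg A') := by
  cases A with
  | inl p =>
    cases A' with
    | inl q => exact h
    | inr n => exact (F.toShiftData.lesb_up_iff_prec p n).2 h
  | inr m =>
    cases A' with
    | inl q => exact h.elim
    | inr n => exact h

lemma tack_pos_neg (A : P ⊕ N) : F.toShiftData.tack (F.pos A) (F.neg A) := by
  cases A with
  | inl p => exact le_rfl
  | inr n => exact le_rfl

lemma tens_anti_left {x x' y : P ⊕ Pd} {z : N ⊕ Nd} (h : F.toShiftData.Rrel x x')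
    (h2 : F.toShiftData.tack (Sum.inl (F.tens x' y)) z) :
    F.toShiftData.tack (Sum.inl (F.tens x y)) z := by
  rw [F.resid_right] at h2 ⊢
  exact tack_anti h h2

lemma tens_anti_right {x y y' : P ⊕ Pd} {z : N ⊕ Nd} (h : F.toShiftData.Rrel y y')
    (h2 : F.toShiftData.tack (Sum.inl (F.tens x y')) z) :
    F.toShiftData.tack (Sum.inl (F.tens x y)) z := by
  rw [← F.resid_left] at h2 ⊢
  exact tack_anti h h2

lemma coten_mono_left {x : P ⊕ Pd} {z z' w : N ⊕ Nd} (h : F.toShiftData.Srel z z')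
    (h2 : F.toShiftData.tack x (Sum.inl (F.coten z w))) :
    F.toShiftData.tack x (Sum.inl (F.coten z' w)) := by
  rw [← F.coresid_left] at h2 ⊢
  exact tack_mono h2 h

lemma coten_mono_right {x : P ⊕ Pd} {z w w' : N ⊕ Nd} (h : F.toShiftData.Srel w w')
    (h2 : F.toShiftData.tack x (Sum.inl (F.coten z w))) :
    F.toShiftData.tack x (Sum.inl (F.coten z w'))  := by
  rw [F.coresid_right] at h2 ⊢
  exact tack_mono h2 h

end FAux

/-- Each induced operation on `P ⊕ N` is compatible with `≤π`: `⊗'` and `⊕'` are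
monotone in both coordinates, `\'` and `⦸'` are antitone in the first coordinate and
monotone in the second, and `/'` and `⊘'` are monotone in the first coordinate and
antitone in the second. -/
theorem stmt9 (F : FPLG P Pd N Nd) :
    (∀ A A' B : P ⊕ N, F.toShiftData.lepi A A' →
      F.toShiftData.lepi (F.tens' A B) (F.tens' A' B)) ∧
    (∀ A B B' : P ⊕ N, F.toShiftData.lepi B B' →
      F.toShiftData.lepi (F.tens' A B) (F.tens' A B')) ∧
    (∀ A A' B : P ⊕ N, F.toShiftData.lepi A A' →
      F.toShiftData.lepi (F.coten' A B) (F.coten' A' B)) ∧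
    (∀ A B B' : P ⊕ N, F.toShiftData.lepi B B' →
      F.toShiftData.lepi (F.coten' A B) (F.coten' A B')) ∧
    (∀ A A' B : P ⊕ N, F.toShiftData.lepi A A' →
      F.toShiftData.lepi (F.lres' A' B) (F.lres' A B)) ∧
    (∀ A B B' : P ⊕ N, F.toShiftData.lepi B B' →
      F.toShiftData.lepi (F.lres' A B) (F.lres' A B')) ∧
    (∀ A A' B : P ⊕ N, F.toShiftData.lepi A A' →
      F.toShiftData.lepi (F.rsub' A' B) (F.rsub' A B)) ∧
    (∀ A B B' : P ⊕ N, F.toShiftData.lepi B B' →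
      F.toShiftData.lepi (F.rsub' A B) (F.rsub' A B')) ∧
    (∀ A A' B : P ⊕ N, F.toShiftData.lepi A A' →
      F.toShiftData.lepi (F.rres' A B) (F.rres' A' B)) ∧
    (∀ A B B' : P ⊕ N, F.toShiftData.lepi B B' →
      F.toShiftData.lepi (F.rres' A B') (F.rres' A B)) ∧
    (∀ A A' B : P ⊕ N, F.toShiftData.lepi A A' →
      F.toShiftData.lepi (F.lsub' A B) (F.lsub' A' B)) ∧
    (∀ A B B' : P ⊕ N, F.toShiftData.lepi B B' →
      F.toShiftData.lepi (F.lsub' A B') (F.lsub' A B)) := by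
  refine ⟨?_, ?_, ?_, ?_, ?_, ?_, ?_, ?_, ?_, ?_, ?_, ?_⟩
  · intro A A' B h
    exact tens_anti_left (lepi_Rrel h)
      (tack_pos_neg (Sum.inl (F.tens (F.pos A') (F.pos B))))
  · intro A B B' h
    exact tens_anti_right (lepi_Rrel h)
      (tack_pos_neg (Sum.inl (F.tens (F.pos A) (F.pos B'))))
  · intro A A' B h
    exact coten_mono_left (lepi_Srel h)
      (tack_pos_neg (Sum.inr (F.coten (F.neg A) (F.neg B))))
  · intro A B B' h
    exact coten_mono_right (lepi_Srel h)
      (tack_pos_neg (Sum.inr (F.coten (F.neg A) (F.neg B))))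
  · intro A A' B h
    have t0 := tack_pos_neg (F := F) (Sum.inr (F.lres (F.pos A') (F.neg B)))
    have t1 := (F.resid_left (F.pos A') _ (F.neg B)).1 t0
    have t2 := tens_anti_left (lepi_Rrel h) t1
    exact (F.resid_left (F.pos A) _ (F.neg B)).2 t2
  · intro A B B' h
    have t0 := tack_pos_neg (F := F) (Sum.inr (F.lres (F.pos A) (F.neg B)))
    have t1 := (F.resid_left (F.pos A) _ (F.neg B)).1 t0
    have t2 := tack_mono t1 (lepi_Srel h)
    exact (F.resid_left (F.pos A) _ (F.neg B')).2 t2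
  · intro A A' B h
    have t0 := tack_pos_neg (F := F) (Sum.inl (F.rsub (F.neg A) (F.pos B)))
    have t1 := (F.coresid_right (F.pos B) (F.neg A) _).2 t0
    have t2 := coten_mono_left (lepi_Srel h) t1
    exact (F.coresid_right (F.pos B) (F.neg A') _).1 t2
  · intro A B B' h
    have t0 := tack_pos_neg (F := F) (Sum.inl (F.rsub (F.neg A) (F.pos B')))
    have t1 := (F.coresid_right (F.pos B') (F.neg A) _).2 t0
    have t2 := tack_anti (lepi_Rrel h) t1
    exact (F.coresid_right (F.pos B) (F.neg A) _).1 t2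
  · intro A A' B h
    have t0 := tack_pos_neg (F := F) (Sum.inr (F.rres (F.neg A) (F.pos B)))
    have t1 := (F.resid_right _ (F.pos B) (F.neg A)).2 t0
    have t2 := tack_mono t1 (lepi_Srel h)
    exact (F.resid_right _ (F.pos B) (F.neg A')).1 t2
  · intro A B B' h
    have t0 := tack_pos_neg (F := F) (Sum.inr (F.rres (F.neg A) (F.pos B')))
    have t1 := (F.resid_right _ (F.pos B') (F.neg A)).2 t0
    have t2 := tens_anti_right (lepi_Rrel h) t1
    exact (F.resid_right _ (F.pos B) (F.neg A)).1 t2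
  · intro A A' B h
    have t0 := tack_pos_neg (F := F) (Sum.inl (F.lsub (F.pos A') (F.neg B)))
    have t1 := (F.coresid_left (F.pos A') _ (F.neg B)).1 t0
    have t2 := tack_anti (lepi_Rrel h) t1
    exact (F.coresid_left (F.pos A) _ (F.neg B)).2 t2
  · intro A B B' h
    have t0 := tack_pos_neg (F := F) (Sum.inl (F.lsub (F.pos A) (F.neg B)))
    have t1 := (F.coresid_left (F.pos A) _ (F.neg B)).1 t0
    have t2 := coten_mono_right (lepi_Srel h) t1
    exact (F.coresid_left (F.pos A) _ (F.neg B')).2 t2
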